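/- Let G be a closed subgroup of S∞. If the set 𝓕 = {g ∈ G : the set {a ∈ ℕ : the orbit of a under g is finite} is finite} is co-Haar null in G, then G has the finite algebraic closure property (FACP). -/

import Mathlib

open MeasureTheory

/-- The topology of pointwise convergence on `S∞ = Equiv.Perm V` (`V` discrete): the topology
induced by the embedding `σ ↦ (σ, σ⁻¹)` into `(V → V) × (V → V)`. -/
instance instPermTop {V : Type*} [TopologicalSpace V] : TopologicalSpace (Equiv.Perm V) :=
  TopologicalSpace.induced (fun σ : Equiv.Perm V => ((⇑σ, ⇑σ⁻¹) : (V → V) × (V → V)))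
    inferInstance

noncomputable instance instPermMeas {V : Type*} [TopologicalSpace V] :
    MeasurableSpace (Equiv.Perm V) := borel _

instance instPermBorel {V : Type*} [TopologicalSpace V] : BorelSpace (Equiv.Perm V) := ⟨rfl⟩

/-- A set `A` in a topological group is *Haar null* if there are a Borel set `B ⊇ A` and a
Borel probability measure `μ` such that `μ (g • B • h) = 0` for all `g, h`. -/
def HaarNull {G : Type*} [Group G] [MeasurableSpace G] (A : Set G) : Prop :=
  ∃ B : Set G, A ⊆ B ∧ MeasurableSet B ∧
    ∃ μ : Measure G, IsProbabilityMeasure μ ∧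
      ∀ g h : G, μ ((fun b => g * b * h) '' B) = 0

/-- The orbit `{gᵏ(a) : k ∈ ℤ}` of a point `a` under a permutation `g`. -/
def orbitZ {α : Type*} (g : Equiv.Perm α) (a : α) : Set α :=
  {b | ∃ k : ℤ, (g ^ k) a = b}

/-- The group-theoretic algebraic closure of `S ⊆ ℕ` with respect to a subgroup `G ≤ S∞`:
the set of points whose orbit under the pointwise stabilizer `G_(S)` is finite. -/
def ACL (G : Subgroup (Equiv.Perm ℕ)) (S : Set ℕ) : Set ℕ :=
  {x | {y | ∃ g ∈ G, (∀ s ∈ S, g s = s) ∧ g x = y}.Finite}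

/-- The orbit of `x` under the pointwise stabilizer `G_(F)`. -/
def stabOrbit (G : Subgroup (Equiv.Perm ℕ)) (F : Set ℕ) (x : ℕ) : Set ℕ :=
  {y | ∃ g ∈ G, (∀ s ∈ F, g s = s) ∧ g x = y}

/-- If in a closed subgroup `G ≤ S∞` the set of elements with only finitely many finite orbits
is co-Haar null, then `G` has the FACP. -/
theorem stmt_9 (G : Subgroup (Equiv.Perm ℕ)) (hG : IsClosed (G : Set (Equiv.Perm ℕ)))
    (hF : HaarNull ({g : G | {a : ℕ | (orbitZ (g : Equiv.Perm ℕ) a).Finite}.Finite}ᶜ)) :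
    ∀ S : Set ℕ, S.Finite → (ACL G S).Finite := by
  intro S hS
  by_contra hinf
  obtain ⟨B, hsub, hBmeas, μ, hμprob, hnull⟩ := hF
  -- The pointwise stabilizer of `S` inside `G`
  set H : Set G := {g : G | ∀ s ∈ S, (g : Equiv.Perm ℕ) s = s} with hH
  -- every element of the stabilizer has infinitely many points with finite orbit
  have hHsub : H ⊆ B := by
    intro g hg
    apply hsub
    simp only [Set.mem_compl_iff, Set.mem_setOf_eq]
    intro hfin
    apply hinf
    apply hfin.subset
    intro x hx
    simp only [Set.mem_setOf_eq]
    refine Set.Finite.subset hx ?_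
    rintro y ⟨k, rfl⟩
    exact ⟨(g : Equiv.Perm ℕ) ^ k, zpow_mem g.2 k,
      fun s hs => Function.IsFixedPt.perm_zpow (hg s hs) k, rfl⟩
  haveI : Finite ↥S := hS.to_subtype
  -- cover `G` by countably many fibers of the restriction map to `S → ℕ`
  have hcover : (Set.univ : Set G) ⊆
      ⋃ f : (↥S → ℕ), {g : G | (fun s : ↥S => (g : Equiv.Perm ℕ) s) = f} := by
    intro g _
    exact Set.mem_iUnion.2 ⟨_, rfl⟩
  have hzero : ∀ f : (↥S → ℕ),
      μ {g : G | (fun s : ↥S => (g : Equiv.Perm ℕ) s) = f} = 0 := by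
    intro f
    rcases Set.eq_empty_or_nonempty
        {g : G | (fun s : ↥S => (g : Equiv.Perm ℕ) s) = f} with he | ⟨g0, hg0⟩
    · simp [he]
    · have hsub2 : {g : G | (fun s : ↥S => (g : Equiv.Perm ℕ) s) = f}
          ⊆ (fun b => g0 * b * 1) '' B := by
        intro g hg
        refine ⟨g0⁻¹ * g, hHsub ?_, by group⟩
        intro s hs
        have h1 := congrFun hg ⟨s, hs⟩
        have h2 := congrFun hg0 ⟨s, hs⟩
        simp only [Set.mem_setOf_eq] at h1 h2
        have hgg : (g : Equiv.Perm ℕ) s = (g0 : Equiv.Perm ℕ) s := by rw [h1, h2]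
        show ((g0⁻¹ * g : G) : Equiv.Perm ℕ) s = s
        simp only [Subgroup.coe_mul, Subgroup.coe_inv, Equiv.Perm.mul_apply, hgg]
        exact Equiv.symm_apply_apply _ _
      exact measure_mono_null hsub2 (hnull g0 1)
  have hμ0 : μ Set.univ = 0 := by
    refine le_antisymm ?_ zero_le
    calc μ Set.univ ≤ μ (⋃ f : (↥S → ℕ), {g : G | (fun s : ↥S => (g : Equiv.Perm ℕ) s) = f}) :=
          measure_mono hcover
      _ ≤ ∑' f : (↥S → ℕ), μ {g : G | (fun s : ↥S => (g : Equiv.Perm ℕ) s) = f} :=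
          measure_iUnion_le _
      _ = 0 := by simp [hzero]
  have h1 : (1 : ENNReal) = 0 := by rw [← hμprob.measure_univ, hμ0]
  exact one_ne_zero h1
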